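/- Let q ≥ 3, β > 0 and h ≥ 0, and let x_0 be a global minimum point of G_{β,h}, with coordinates written so that x_{0,1} ≥ x_{0,2} = ⋯ = x_{0,q}. Then the second partial derivatives of G_{β,h} at x_0 satisfy: ∂²G_{β,h}/∂u_1²(x_0) = β − β²(q−1) x_{0,1} x_{0,q}; ∂²G_{β,h}/∂u_1∂u_q(x_0) = β² x_{0,1} x_{0,q}; ∂²G_{β,h}/∂u_q²(x_0) = β − β²( x_{0,1} x_{0,q} + (q−2) x_{0,q}² ); and ∂²G_{β,h}/∂u_2∂u_q(x_0) = β² x_{0,q}². -/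

import Mathlib

open Finset

noncomputable section

namespace CWP

def G (q : ℕ) [NeZero q] (β h : ℝ) (u : Fin q → ℝ) : ℝ :=
  β / 2 * (∑ i, u i ^ 2) -
    Real.log (∑ k, Real.exp (β * u k + if k = 0 then h else 0))

def d2G (q : ℕ) [NeZero q] (β h : ℝ) (x : Fin q → ℝ) (i j : Fin q) : ℝ :=
  fderiv ℝ (fun u => fderiv ℝ (G q β h) u (Pi.single j 1)) x (Pi.single i 1)

variable {q : ℕ} [NeZero q] {β h : ℝ}

def EE (β h : ℝ) (k : Fin q) (u : Fin q → ℝ) : ℝ :=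
  Real.exp (β * u k + if k = 0 then h else 0)

def SS (β h : ℝ) (u : Fin q → ℝ) : ℝ := ∑ k, EE β h k u

lemma SS_pos (u : Fin q → ℝ) : 0 < SS β h u :=
  Finset.sum_pos (fun k _ => Real.exp_pos _) ⟨0, mem_univ 0⟩

lemma hasFDerivAt_EE (k : Fin q) (u : Fin q → ℝ) :
    HasFDerivAt (fun u => EE β h k u)
      ((EE β h k u * β) • ContinuousLinearMap.proj (R := ℝ) (φ := fun _ : Fin q => ℝ) k) u := by
  have h1 : HasFDerivAt (fun u : Fin q → ℝ => β * u k + if k = 0 then h else 0)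
      (β • (ContinuousLinearMap.proj (R := ℝ) (φ := fun _ : Fin q => ℝ) k)) u := by
    have h0 := (ContinuousLinearMap.proj (R := ℝ) (φ := fun _ : Fin q => ℝ) k).hasFDerivAt (x := u)
    simpa using (h0.const_mul β).add_const (if k = 0 then h else 0)
  have h2 := h1.exp
  simpa [EE, smul_smul, mul_comm] using h2

lemma hasFDerivAt_SS (u : Fin q → ℝ) :
    HasFDerivAt (fun u => SS β h u)
      (∑ k, (EE β h k u * β) • ContinuousLinearMap.proj (R := ℝ) (φ := fun _ : Fin q => ℝ) k) u :=
  HasFDerivAt.fun_sum (fun k _ => hasFDerivAt_EE k u)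

lemma hasFDerivAt_sq (i : Fin q) (u : Fin q → ℝ) :
    HasFDerivAt (fun u : Fin q → ℝ => u i ^ 2)
      (((2 : ℝ) * u i) • ContinuousLinearMap.proj (R := ℝ) (φ := fun _ : Fin q => ℝ) i) u := by
  have h0 := (ContinuousLinearMap.proj (R := ℝ) (φ := fun _ : Fin q => ℝ) i).hasFDerivAt (x := u)
  have h1 := h0.mul h0
  have e : (fun u : Fin q → ℝ => u i ^ 2) =
      ⇑(ContinuousLinearMap.proj (R := ℝ) (φ := fun _ : Fin q => ℝ) i) *
        ⇑(ContinuousLinearMap.proj (R := ℝ) (φ := fun _ : Fin q => ℝ) i) := by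
    funext v; simp [pow_two]
  rw [e]
  exact h1.congr_fderiv (by ext v; simp; ring)

lemma hasFDerivAt_G (u : Fin q → ℝ) :
    HasFDerivAt (G q β h)
      ((β / 2) • (∑ i, ((2 : ℝ) * u i) • ContinuousLinearMap.proj (R := ℝ) (φ := fun _ : Fin q => ℝ) i)
        - (SS β h u)⁻¹ •
          ∑ k, (EE β h k u * β) • ContinuousLinearMap.proj (R := ℝ) (φ := fun _ : Fin q => ℝ) k) u := by
  have h1 : HasFDerivAt (fun u : Fin q → ℝ => ∑ i, u i ^ 2)
      (∑ i, ((2 : ℝ) * u i) • ContinuousLinearMap.proj (R := ℝ) (φ := fun _ : Fin q => ℝ) i) u :=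
    HasFDerivAt.fun_sum (fun i _ => hasFDerivAt_sq i u)
  have h2 := (hasFDerivAt_SS (β := β) (h := h) u).log (ne_of_gt (SS_pos u))
  have h3 := (h1.const_mul (β / 2)).sub h2
  have hG : G q β h = fun u : Fin q → ℝ => β / 2 * ∑ i, u i ^ 2 - Real.log (SS β h u) := rfl
  rw [hG]
  exact h3

lemma proj_single (i j : Fin q) :
    ContinuousLinearMap.proj (R := ℝ) (φ := fun _ : Fin q => ℝ) i (Pi.single j 1) =
      if i = j then (1 : ℝ) else 0 := by
  simp [Pi.single_apply, eq_comm]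

lemma fderiv_G_apply (u : Fin q → ℝ) (j : Fin q) :
    fderiv ℝ (G q β h) u (Pi.single j 1) = β * u j - β * (EE β h j u / SS β h u) := by
  rw [(hasFDerivAt_G u).fderiv]
  simp only [ContinuousLinearMap.sub_apply, ContinuousLinearMap.smul_apply,
    ContinuousLinearMap.sum_apply, proj_single, smul_eq_mul, mul_ite, mul_one, mul_zero,
    Finset.sum_ite_eq, Finset.sum_ite_eq', mem_univ, if_true]
  field_simp [ne_of_gt (SS_pos (β := β) (h := h) u)]

lemma hasFDerivAt_ratio (j : Fin q) (x : Fin q → ℝ) :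
    HasFDerivAt (fun u => EE β h j u / SS β h u)
      ((EE β h j x • ((-((SS β h x) ^ 2)⁻¹) •
          ∑ k, (EE β h k x * β) • ContinuousLinearMap.proj (R := ℝ) (φ := fun _ : Fin q => ℝ) k))
        + ((SS β h x)⁻¹ • ((EE β h j x * β) •
          ContinuousLinearMap.proj (R := ℝ) (φ := fun _ : Fin q => ℝ) j))) x := by
  have hS := hasFDerivAt_SS (β := β) (h := h) x
  have hinv : HasDerivAt (fun y : ℝ => y⁻¹) (-((SS β h x) ^ 2)⁻¹) (SS β h x) :=
    hasDerivAt_inv (ne_of_gt (SS_pos x))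
  have hSinv := hinv.comp_hasFDerivAt x hS
  have hE := hasFDerivAt_EE (β := β) (h := h) j x
  have := hE.mul hSinv
  have hfun : (fun u => EE β h j u / SS β h u) = fun u => EE β h j u * (SS β h u)⁻¹ := by
    funext u; rw [div_eq_mul_inv]
  rw [hfun]
  exact this

lemma d2G_formula (x : Fin q → ℝ) (i j : Fin q) :
    d2G q β h x i j =
      β * (if j = i then 1 else 0) -
        β * (EE β h j x * (-((SS β h x) ^ 2)⁻¹ * (EE β h i x * β))
          + (SS β h x)⁻¹ * (EE β h j x * β * (if j = i then 1 else 0))) := by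
  unfold d2G
  have hfun : (fun u => fderiv ℝ (G q β h) u (Pi.single j 1))
      = fun u => β * u j - β * (EE β h j u / SS β h u) := funext fun u => fderiv_G_apply u j
  rw [hfun]
  have hproj : HasFDerivAt (fun u : Fin q → ℝ => u j)
      (ContinuousLinearMap.proj (R := ℝ) (φ := fun _ : Fin q => ℝ) j) x :=
    (ContinuousLinearMap.proj (R := ℝ) (φ := fun _ : Fin q => ℝ) j).hasFDerivAt (x := x)
  have hmain := (hproj.const_mul β).sub ((hasFDerivAt_ratio (β := β) (h := h) j x).const_mul β)
  rw [HasFDerivAt.fderiv (f := fun u => β * u j - β * (EE β h j u / SS β h u)) hmain]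
  simp only [ContinuousLinearMap.sub_apply, ContinuousLinearMap.smul_apply,
    ContinuousLinearMap.add_apply, ContinuousLinearMap.sum_apply, proj_single, smul_eq_mul,
    mul_ite, mul_one, mul_zero, Finset.sum_ite_eq, Finset.sum_ite_eq', mem_univ, if_true]

lemma crit (x : Fin q → ℝ) (hβ : 0 < β) (hx : ∀ y, G q β h x ≤ G q β h y) (j : Fin q) :
    EE β h j x = x j * SS β h x := by
  have hmin : IsLocalMin (G q β h) x := Filter.Eventually.of_forall hx
  have h0 := hmin.fderiv_eq_zero
  have h1 := fderiv_G_apply (β := β) (h := h) x j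
  rw [h0] at h1
  simp only [ContinuousLinearMap.zero_apply] at h1
  have h2 : β * x j = β * (EE β h j x / SS β h x) := by linarith
  have h3 := mul_left_cancel₀ (ne_of_gt hβ) h2
  rw [h3]
  exact (div_mul_cancel₀ _ (ne_of_gt (SS_pos (β := β) (h := h) x))).symm ▸
    (by field_simp)

lemma d2G_min (x : Fin q → ℝ) (hβ : 0 < β) (hx : ∀ y, G q β h x ≤ G q β h y) (i j : Fin q) :
    d2G q β h x i j =
      β * (if j = i then 1 else 0) - β ^ 2 * ((if j = i then 1 else 0) * x j - x i * x j) := by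
  rw [d2G_formula, crit x hβ hx i, crit x hβ hx j]
  have hS := ne_of_gt (SS_pos (β := β) (h := h) x)
  by_cases hij : j = i <;> simp only [hij, if_true, if_false] <;> field_simp <;> ring

/-- The Hessian entries of G_{β,h} at a global minimum point x₀ written with
x_{0,1} ≥ x_{0,2} = ⋯ = x_{0,q}. -/
theorem stmt_18 (q : ℕ) [NeZero q] (hq : 3 ≤ q) (β h : ℝ) (hβ : 0 < β) (hh : 0 ≤ h)
    (x : Fin q → ℝ) (hx : ∀ y, G q β h x ≤ G q β h y)
    (heq : ∀ i j : Fin q, i ≠ 0 → j ≠ 0 → x i = x j)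
    (hle : ∀ i : Fin q, x i ≤ x 0)
    (hsum : ∑ i, x i = 1) :
    d2G q β h x 0 0 = β - β ^ 2 * ((q : ℝ) - 1) * x 0 * x ⟨q - 1, by omega⟩ ∧
    d2G q β h x 0 ⟨q - 1, by omega⟩ = β ^ 2 * x 0 * x ⟨q - 1, by omega⟩ ∧
    d2G q β h x ⟨q - 1, by omega⟩ ⟨q - 1, by omega⟩ =
      β - β ^ 2 * (x 0 * x ⟨q - 1, by omega⟩ + ((q : ℝ) - 2) * (x ⟨q - 1, by omega⟩) ^ 2) ∧
    d2G q β h x ⟨1, by omega⟩ ⟨q - 1, by omega⟩ = β ^ 2 * (x ⟨q - 1, by omega⟩) ^ 2 := by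
  set l : Fin q := ⟨q - 1, by omega⟩ with hl
  have hl0 : l ≠ 0 := by
    simp only [hl, Ne, Fin.ext_iff, Fin.val_zero]
    omega
  have h10 : (⟨1, by omega⟩ : Fin q) ≠ 0 := by
    simp [Ne, Fin.ext_iff]
  have h1l : (⟨1, by omega⟩ : Fin q) ≠ l := by
    simp only [hl, Ne, Fin.ext_iff]
    omega
  have h0l : (0 : Fin q) ≠ l := fun hc => hl0 hc.symm
  have hx1l : x ⟨1, by omega⟩ = x l := heq _ _ h10 hl0
  -- sum identity : x 0 + (q-1) * x l = 1
  have hsum' : x 0 + ((q : ℝ) - 1) * x l = 1 := by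
    have hsplit : ∑ i, x i = x 0 + ∑ i ∈ univ.erase 0, x i :=
      (Finset.add_sum_erase univ x (mem_univ 0)).symm
    have hconst : ∑ i ∈ univ.erase 0, x i = ∑ _i ∈ univ.erase (0 : Fin q), x l :=
      Finset.sum_congr rfl (fun i hi => heq i l (Finset.ne_of_mem_erase hi) hl0)
    have hcard : (univ.erase (0 : Fin q)).card = q - 1 := by
      rw [Finset.card_erase_of_mem (mem_univ 0), Finset.card_univ, Fintype.card_fin]
    rw [hsplit, hconst, Finset.sum_const, hcard, nsmul_eq_mul] at hsum
    have hq1 : ((q - 1 : ℕ) : ℝ) = (q : ℝ) - 1 := by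
      have : 1 ≤ q := by omega
      push_cast [this]
      ring
    rw [hq1] at hsum
    linarith
  refine ⟨?_, ?_, ?_, ?_⟩
  · rw [d2G_min x hβ hx 0 0]
    simp only [if_true]
    linear_combination (β ^ 2 * x 0) * hsum'
  · rw [d2G_min x hβ hx 0 l, if_neg (fun hc => h0l hc.symm)]
    ring
  · rw [d2G_min x hβ hx l l]
    simp only [if_true]
    linear_combination (β ^ 2 * x l) * hsum'
  · rw [d2G_min x hβ hx ⟨1, by omega⟩ l, if_neg (fun hc => h1l hc.symm), hx1l]
    ring

end CWP
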